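/- Let T⁻ be a nondegenerate triangle with vertices x₁, x₂, x₃ and barycentric coordinates λᵢ. For 0 < β < 3/2, define ψᵢ⁻ = 6λᵢλ₃(x₃ − xᵢ) + β(−1)^i λ₁λ₂(x₂ − x₁) and φᵢ⁻ = λᵢ∇λ₃ − λ₃∇λᵢ for i = 1, 2. Then the 2×2 matrix M⁻ with entries M⁻ᵢⱼ = ∫_{T⁻} ψᵢ⁻ · φⱼ⁻ dx equals |T⁻| times the matrix with diagonal entries (24 − β)/60 and off-diagonal entries (6 + β)/60, and both its eigenvalues exceed |T⁻|/4. -/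

import Mathlib

open MeasureTheory Matrix
open scoped RealInnerProductSpace

noncomputable section MacroAux

namespace MacroAux

/-- antiderivative evaluation for quartic polynomials. -/
lemma integral_poly4 (a b c0 c1 c2 c3 c4 : ℝ) :
    ∫ t in a..b, (c0 + c1*t + c2*t^2 + c3*t^3 + c4*t^4) =
      (c0*b + c1*b^2/2 + c2*b^3/3 + c3*b^4/4 + c4*b^5/5)
        - (c0*a + c1*a^2/2 + c2*a^3/3 + c3*a^4/4 + c4*a^5/5) := by
  apply intervalIntegral.integral_eq_sub_of_hasDerivAt
  · intro t ht
    have h : HasDerivAt (fun t : ℝ => c0*t + c1*t^2/2 + c2*t^3/3 + c3*t^4/4 + c4*t^5/5)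
        (c0 + c1*t + c2*t^2 + c3*t^3 + c4*t^4) t := by
      have h1 : HasDerivAt (fun t : ℝ => t) 1 t := hasDerivAt_id t
      have h2 := hasDerivAt_pow 2 t
      have h3 := hasDerivAt_pow 3 t
      have h4 := hasDerivAt_pow 4 t
      have h5 := hasDerivAt_pow 5 t
      refine (((((h1.const_mul c0).add ((h2.const_mul c1).div_const 2)).add
        ((h3.const_mul c2).div_const 3)).add ((h4.const_mul c3).div_const 4)).add
        ((h5.const_mul c4).div_const 5)).congr_deriv ?_
      push_cast; ring
    exact h
  · apply Continuous.intervalIntegrable; continuity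

/-- the closed standard triangle in the plane. -/
def stdTri : Set (ℝ × ℝ) := {q | 0 ≤ q.1 ∧ 0 ≤ q.2 ∧ q.1 + q.2 ≤ 1}

lemma stdTri_closed : IsClosed stdTri := by
  have h1 : IsClosed {q : ℝ × ℝ | 0 ≤ q.1} := isClosed_le continuous_const continuous_fst
  have h2 : IsClosed {q : ℝ × ℝ | 0 ≤ q.2} := isClosed_le continuous_const continuous_snd
  have h3 : IsClosed {q : ℝ × ℝ | q.1 + q.2 ≤ 1} :=
    isClosed_le (continuous_fst.add continuous_snd) continuous_const
  have : stdTri = {q : ℝ × ℝ | 0 ≤ q.1} ∩ ({q | 0 ≤ q.2} ∩ {q | q.1 + q.2 ≤ 1}) := by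
    ext q; simp [stdTri, and_assoc]
  rw [this]; exact h1.inter (h2.inter h3)

lemma stdTri_meas : MeasurableSet stdTri := stdTri_closed.measurableSet

lemma stdTri_compact : IsCompact stdTri := by
  have hsub : stdTri ⊆ Set.Icc (0, 0) (1, 1) := by
    rintro ⟨s, t⟩ ⟨h1, h2, h3⟩
    constructor <;> constructor <;> simp_all <;> linarith
  exact (isCompact_Icc).of_isClosed_subset stdTri_closed hsub

lemma stdTri_convexHull :
    convexHull ℝ {((0:ℝ),(0:ℝ)), ((1:ℝ),(0:ℝ)), ((0:ℝ),(1:ℝ))} = stdTri := by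
  apply le_antisymm
  · apply convexHull_min
    · rintro q (rfl | rfl | rfl) <;> norm_num [stdTri]
    · rintro ⟨a1, a2⟩ ⟨ha1, ha2, ha3⟩ ⟨b1, b2⟩ ⟨hb1, hb2, hb3⟩ s t hs ht hst
      refine ⟨?_, ?_, ?_⟩ <;> simp only [Prod.smul_fst, Prod.smul_snd, Prod.fst_add,
        Prod.snd_add, smul_eq_mul]
      · exact add_nonneg (mul_nonneg hs ha1) (mul_nonneg ht hb1)
      · exact add_nonneg (mul_nonneg hs ha2) (mul_nonneg ht hb2)
      · nlinarith
  · rintro ⟨s, t⟩ ⟨hs, ht, hst⟩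
    rw [convexHull_eq]
    refine ⟨Fin 3, Finset.univ, ![1 - s - t, s, t], ![(0,0), (1,0), (0,1)], ?_, ?_, ?_, ?_⟩
    · intro i _; fin_cases i <;> simp <;> linarith
    · simp [Fin.sum_univ_three]; ring
    · intro i _; fin_cases i <;> simp
    · rw [Finset.centerMass_eq_of_sum_1]
      · simp [Fin.sum_univ_three, Prod.ext_iff]
      · simp [Fin.sum_univ_three]; ring

/-- Fubini over the standard triangle. -/
lemma integral_stdTri (f : ℝ × ℝ → ℝ) (hf : Continuous f) :
    ∫ q in stdTri, f q = ∫ s in (0:ℝ)..1, ∫ t in (0:ℝ)..(1-s), f (s, t) := by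
  have hInt : IntegrableOn f stdTri :=
    hf.continuousOn.integrableOn_compact stdTri_compact
  rw [← integral_indicator stdTri_meas]
  have hIntInd : Integrable (stdTri.indicator f)
      ((volume : Measure ℝ).prod volume) := by
    rw [← Measure.volume_eq_prod]
    exact (integrable_indicator_iff stdTri_meas).2 hInt
  rw [show (volume : Measure (ℝ × ℝ)) = (volume : Measure ℝ).prod volume from rfl]
  rw [integral_prod _ hIntInd]
  have key : ∀ s : ℝ, (∫ t, stdTri.indicator f (s, t)) =
      (Set.Icc (0:ℝ) 1).indicator (fun s => ∫ t in (0:ℝ)..(1-s), f (s, t)) s := by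
    intro s
    by_cases hs : 0 ≤ s
    · have h1 : ∀ t, stdTri.indicator f (s, t) =
          (Set.Icc (0:ℝ) (1-s)).indicator (fun t => f (s, t)) t := by
        intro t
        simp only [Set.indicator, stdTri, Set.mem_setOf_eq, Set.mem_Icc]
        by_cases h : 0 ≤ t ∧ t ≤ 1 - s
        · rw [if_pos ⟨hs, h.1, by linarith [h.2]⟩, if_pos h]
        · rw [if_neg, if_neg h]; rintro ⟨_, ha, hb⟩; exact h ⟨ha, by linarith⟩
      simp only [h1]
      rw [integral_indicator measurableSet_Icc]
      by_cases hs1 : s ≤ 1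
      · rw [Set.indicator_of_mem (Set.mem_Icc.2 ⟨hs, hs1⟩), integral_Icc_eq_integral_Ioc,
          ← intervalIntegral.integral_of_le (by linarith : (0:ℝ) ≤ 1 - s)]
      · rw [Set.indicator_of_notMem (by simp [Set.mem_Icc]; intro; linarith),
          Set.Icc_eq_empty (by intro h; exact hs1 (by linarith [h])), Measure.restrict_empty,
          integral_zero_measure]
    · have h1 : ∀ t, stdTri.indicator f (s, t) = 0 := by
        intro t
        exact Set.indicator_of_notMem (fun h => hs h.1) _
      simp only [h1, integral_zero]
      rw [Set.indicator_of_notMem]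
      simp only [Set.mem_Icc, not_and_or, not_le]
      left; linarith [lt_of_not_ge hs]
  rw [integral_congr_ae (Filter.Eventually.of_forall key), integral_indicator measurableSet_Icc,
    integral_Icc_eq_integral_Ioc, ← intervalIntegral.integral_of_le zero_le_one]

variable (x : Fin 3 → EuclideanSpace ℝ (Fin 2))

/-- the linear map sending `e₀ ↦ x 1 - x 0`, `e₁ ↦ x 2 - x 0`. -/
def Alin : EuclideanSpace ℝ (Fin 2) →ₗ[ℝ] EuclideanSpace ℝ (Fin 2) where
  toFun p := p 0 • (x 1 - x 0) + p 1 • (x 2 - x 0)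
  map_add' p q := by
    simp only [PiLp.add_apply, add_smul]; abel
  map_smul' c p := by
    simp only [PiLp.smul_apply, smul_eq_mul, RingHom.id_apply, smul_add, smul_smul]

lemma Alin_apply (p : EuclideanSpace ℝ (Fin 2)) :
    Alin x p = p 0 • (x 1 - x 0) + p 1 • (x 2 - x 0) := rfl

lemma li (hx : AffineIndependent ℝ x) (a b : ℝ)
    (h : a • (x 1 - x 0) + b • (x 2 - x 0) = 0) : a = 0 ∧ b = 0 := by
  have hsum : ∑ e : Fin 3, (![-(a+b), a, b]) e = 0 := by
    simp [Fin.sum_univ_three]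
  have hcomb : ∑ e : Fin 3, (![-(a+b), a, b]) e • x e = 0 := by
    have h2 : ∑ e : Fin 3, (![-(a+b), a, b]) e • x e
        = a • (x 1 - x 0) + b • (x 2 - x 0) := by
      simp only [Fin.sum_univ_three, Matrix.cons_val_zero, Matrix.cons_val_one, Matrix.head_cons,
        Matrix.cons_val_two, Matrix.tail_cons]
      module
    rw [h2]; exact h
  have key := affineIndependent_iff.1 hx Finset.univ ![-(a+b), a, b] (by simpa using hsum)
    (by simpa using hcomb)
  exact ⟨key 1 (Finset.mem_univ _), key 2 (Finset.mem_univ _)⟩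

lemma Alin_inj (hx : AffineIndependent ℝ x) : Function.Injective (Alin x) := by
  intro p q h
  have h2 : (p 0 - q 0) • (x 1 - x 0) + (p 1 - q 1) • (x 2 - x 0) = 0 := by
    simp only [sub_smul]
    have heq : Alin x p = Alin x q := h
    rw [Alin_apply, Alin_apply] at heq
    rw [sub_add_sub_comm, heq]; abel
  obtain ⟨h0, h1⟩ := li x hx _ _ h2
  have e0 : p 0 = q 0 := by linarith [sub_eq_zero.mp h0]
  have e1 : p 1 = q 1 := by linarith [sub_eq_zero.mp h1]
  ext i
  fin_cases i
  · exact e0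
  · exact e1

lemma Alin_det_ne_zero (hx : AffineIndependent ℝ x) : LinearMap.det (Alin x) ≠ 0 := by
  have hbij : Function.Bijective (Alin x) :=
    ⟨Alin_inj x hx, LinearMap.injective_iff_surjective.1 (Alin_inj x hx)⟩
  have := (LinearEquiv.ofBijective (Alin x) hbij).isUnit_det'
  have hco : ((LinearEquiv.ofBijective (Alin x) hbij : _ ≃ₗ[ℝ] _) :
      EuclideanSpace ℝ (Fin 2) →ₗ[ℝ] EuclideanSpace ℝ (Fin 2)) = Alin x := rfl
  rw [hco] at this
  exact this.ne_zero

/-- vertices of the reference triangle in `EuclideanSpace ℝ (Fin 2)`. -/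
def pts : Fin 3 → EuclideanSpace ℝ (Fin 2) :=
  ![0, EuclideanSpace.single 0 1, EuclideanSpace.single 1 1]

/-- the affine parametrization of the triangle. -/
def Gaff : EuclideanSpace ℝ (Fin 2) →ᵃ[ℝ] EuclideanSpace ℝ (Fin 2) :=
  AffineMap.mk' (fun p => x 0 + Alin x p) (Alin x) 0 (by
    intro p
    simp [Alin_apply, vsub_eq_sub, vadd_eq_add]
    abel)

lemma Gaff_apply (p : EuclideanSpace ℝ (Fin 2)) : Gaff x p = x 0 + Alin x p := rfl

/-- the reference triangle. -/
def refT : Set (EuclideanSpace ℝ (Fin 2)) := convexHull ℝ (Set.range pts)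

lemma refT_compact : IsCompact refT :=
  (Set.finite_range pts).isCompact_convexHull ℝ

lemma refT_meas : MeasurableSet refT :=
  refT_compact.isClosed.measurableSet

lemma Gaff_image : Gaff x '' refT = convexHull ℝ (Set.range x) := by
  rw [refT, AffineMap.image_convexHull, ← Set.range_comp]
  have hcomp : (Gaff x) ∘ pts = x := by
    funext i
    fin_cases i <;>
      · show Gaff x _ = _
        rw [Gaff_apply, Alin_apply]
        ext j
        fin_cases j <;>
          simp [pts, EuclideanSpace.single_apply, PiLp.add_apply, PiLp.sub_apply,
            PiLp.smul_apply]
  rw [hcomp]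

/-- the coordinate equivalence. -/
def Φ : EuclideanSpace ℝ (Fin 2) ≃ᵐ ℝ × ℝ :=
  (MeasurableEquiv.toLp 2 (Fin 2 → ℝ)).symm.trans (MeasurableEquiv.finTwoArrow)

lemma Φ_apply (p : EuclideanSpace ℝ (Fin 2)) : Φ p = (p 0, p 1) := rfl

lemma Φ_mp : MeasurePreserving Φ volume volume := by
  have h1 := EuclideanSpace.volume_preserving_symm_measurableEquiv_toLp (Fin 2)
  have h2 := MeasureTheory.volume_preserving_finTwoArrow ℝ
  exact h2.comp h1

lemma Φ_image_refT : Φ '' refT = stdTri := by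
  rw [← stdTri_convexHull, refT]
  have hlin : IsLinearMap ℝ (Φ : EuclideanSpace ℝ (Fin 2) → ℝ × ℝ) := by
    constructor <;> intros <;> simp only [Φ_apply] <;> simp
  rw [hlin.image_convexHull, ← Set.range_comp]
  congr 1
  rw [Set.range_comp]
  have : Set.range pts = {(0 : EuclideanSpace ℝ (Fin 2)), EuclideanSpace.single 0 1,
      EuclideanSpace.single 1 1} := by
    ext p
    constructor
    · rintro ⟨i, rfl⟩; fin_cases i <;> simp [pts]
    · rintro (rfl | rfl | rfl)
      exacts [⟨0, rfl⟩, ⟨1, rfl⟩, ⟨2, rfl⟩]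
  rw [this]
  have h0 : Φ (0 : EuclideanSpace ℝ (Fin 2)) = ((0:ℝ), (0:ℝ)) := by rw [Φ_apply]; simp
  have h1 : Φ (EuclideanSpace.single 0 1) = ((1:ℝ), (0:ℝ)) := by
    rw [Φ_apply]; simp [EuclideanSpace.single_apply]
  have h2 : Φ (EuclideanSpace.single 1 1) = ((0:ℝ), (1:ℝ)) := by
    rw [Φ_apply]; simp [EuclideanSpace.single_apply]
  rw [Set.image_insert_eq, Set.image_insert_eq, Set.image_singleton, h0, h1, h2]

/-- Main transfer lemma: integrals of functions of the barycentric coordinates over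
the triangle reduce to integrals over the standard triangle. -/
lemma transfer (hx : AffineIndependent ℝ x)
    (lam : Fin 3 → (EuclideanSpace ℝ (Fin 2) →ᵃ[ℝ] ℝ))
    (hlam : ∀ i j, lam i (x j) = if i = j then 1 else 0)
    (g : Fin 3 → EuclideanSpace ℝ (Fin 2))
    (hg : ∀ i p, lam i p = lam i 0 + ⟪g i, p⟫)
    (f : ℝ → ℝ → ℝ → ℝ) :
    ∫ p in convexHull ℝ (Set.range x), f (lam 0 p) (lam 1 p) (lam 2 p) =
      |LinearMap.det (Alin x)| * ∫ q in stdTri, f (1 - q.1 - q.2) q.1 q.2 := by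
  set A := (Alin x).toContinuousLinearMap with hA
  have hG' : ∀ p ∈ refT, HasFDerivWithinAt (Gaff x) A refT p := by
    intro p _
    exact ((A.hasFDerivAt).const_add (x 0)).hasFDerivWithinAt
  have hinj : Set.InjOn (Gaff x) refT := by
    intro p _ q _ h
    apply Alin_inj x hx
    have : x 0 + Alin x p = x 0 + Alin x q := h
    exact add_left_cancel this
  rw [← Gaff_image x, integral_image_eq_integral_abs_det_fderiv_smul volume refT_meas hG' hinj]
  have hdet : (A : EuclideanSpace ℝ (Fin 2) →ₗ[ℝ] EuclideanSpace ℝ (Fin 2)) = Alin x :=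
    LinearMap.coe_toContinuousLinearMap _
  have hdet2 : A.det = LinearMap.det (Alin x) := by
    rw [ContinuousLinearMap.det, hdet]
  have hi : ∀ k m, ⟪g k, x m⟫ = lam k (x m) - lam k 0 := by
    intro k m; rw [hg k (x m)]; ring
  have hlamG : ∀ k (p : EuclideanSpace ℝ (Fin 2)), lam k (Gaff x p) =
      lam k (x 0) + p 0 * (lam k (x 1) - lam k (x 0)) +
        p 1 * (lam k (x 2) - lam k (x 0)) := by
    intro k p
    rw [Gaff_apply, Alin_apply, hg k, inner_add_right, inner_add_right,
      real_inner_smul_right, real_inner_smul_right, inner_sub_right, inner_sub_right,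
      hi, hi, hi]
    ring
  have h0 : ∀ p : EuclideanSpace ℝ (Fin 2), lam 0 (Gaff x p) = 1 - p 0 - p 1 := by
    intro p; rw [hlamG]; simp [hlam]; ring
  have h1 : ∀ p : EuclideanSpace ℝ (Fin 2), lam 1 (Gaff x p) = p 0 := by
    intro p; rw [hlamG]; simp [hlam]
  have h2 : ∀ p : EuclideanSpace ℝ (Fin 2), lam 2 (Gaff x p) = p 1 := by
    intro p; rw [hlamG]; simp [hlam]
  simp only [h0, h1, h2, hdet2]
  rw [integral_smul, smul_eq_mul]
  congr 1
  rw [← Φ_image_refT,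
    Φ_mp.setIntegral_image_emb Φ.measurableEmbedding
      (fun q : ℝ × ℝ => f (1 - q.1 - q.2) q.1 q.2) refT]
  simp only [Φ_apply]

end MacroAux

end MacroAux


set_option maxHeartbeats 1000000 in
/-- The 2×2 matrix `M⁻ᵢⱼ = ∫_{T⁻} ψᵢ⁻ · φⱼ⁻ dx`, with
`ψᵢ⁻ = 6λᵢλ₃(x₃-xᵢ) + β(-1)ⁱ λ₁λ₂(x₂-x₁)` and `φⱼ⁻ = λⱼ∇λ₃ - λ₃∇λⱼ`, equals
`|T⁻| • !![(24-β)/60, (6+β)/60; (6+β)/60, (24-β)/60]`, and for `0 < β < 3/2` both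
its eigenvalues exceed `|T⁻|/4`.  (Vertices `x₁,x₂,x₃` are `x 0, x 1, x 2`; Lean
index `i : Fin 2` corresponds to the paper index `i+1`.) -/
theorem macroelement_interior_matrix (x : Fin 3 → EuclideanSpace ℝ (Fin 2))
    (hx : AffineIndependent ℝ x)
    (lam : Fin 3 → (EuclideanSpace ℝ (Fin 2) →ᵃ[ℝ] ℝ))
    (hlam : ∀ i j, lam i (x j) = if i = j then 1 else 0)
    (g : Fin 3 → EuclideanSpace ℝ (Fin 2))
    (hg : ∀ i p, lam i p = lam i 0 + ⟪g i, p⟫)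
    (β : ℝ) (hβ : 0 < β) (hβ' : β < 3 / 2)
    (M : Matrix (Fin 2) (Fin 2) ℝ)
    (hM : ∀ i j : Fin 2, M i j =
      ∫ p in convexHull ℝ (Set.range x),
        ⟪(6 * lam i.castSucc p * lam 2 p) • (x 2 - x i.castSucc) +
            ((-1 : ℝ) ^ ((i : ℕ) + 1) * β * lam 0 p * lam 1 p) • (x 1 - x 0),
          lam j.castSucc p • g 2 - lam 2 p • g j.castSucc⟫) :
    M = (volume (convexHull ℝ (Set.range x))).toReal •
        !![(24 - β) / 60, (6 + β) / 60; (6 + β) / 60, (24 - β) / 60] ∧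
      ∀ μ : ℝ, Module.End.HasEigenvalue (Matrix.toLin' M) μ →
        (volume (convexHull ℝ (Set.range x))).toReal / 4 < μ := by
  classical
  have Tmeas : MeasurableSet (convexHull ℝ (Set.range x)) :=
    ((Set.finite_range x).isCompact_convexHull ℝ).isClosed.measurableSet
  set D := |LinearMap.det (MacroAux.Alin x)| with hDdef
  have hD : 0 < D := abs_pos.2 (MacroAux.Alin_det_ne_zero x hx)
  have trans := MacroAux.transfer x hx lam hlam g hg
  -- volume of the triangle
  have hone : (∫ q in MacroAux.stdTri,
      (fun _ _ _ : ℝ => (1:ℝ)) (1 - q.1 - q.2) q.1 q.2) = 1/2 := by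
    rw [MacroAux.integral_stdTri _ (by fun_prop)]
    rw [intervalIntegral.integral_congr
      (g := fun s : ℝ => (1:ℝ) + (-1)*s + 0*s^2 + 0*s^3 + 0*s^4) ?_, MacroAux.integral_poly4]
    · norm_num
    · intro s _
      simp only []
      rw [intervalIntegral.integral_congr
          (g := fun t : ℝ => (1:ℝ) + 0*t + 0*t^2 + 0*t^3 + 0*t^4) (fun t _ => by norm_num),
        MacroAux.integral_poly4]
      ring
  have hvol : (volume (convexHull ℝ (Set.range x))).toReal = D / 2 := by
    have h := trans (fun _ _ _ => (1:ℝ))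
    rw [setIntegral_const, smul_eq_mul, mul_one, hone] at h
    rw [← measureReal_def, h]; ring
  have hvolpos : 0 < (volume (convexHull ℝ (Set.range x))).toReal := by
    rw [hvol]; positivity
  -- pointwise expansion of the inner products
  have hi : ∀ k m, ⟪g k, x m⟫ = lam k (x m) - lam k 0 := fun k m => by rw [hg k (x m)]; ring
  have hAtom : ∀ (a b k : Fin 3), ⟪x a - x b, g k⟫ = lam k (x a) - lam k (x b) := by
    intro a b k; rw [real_inner_comm, inner_sub_right, hi, hi]; ring
  have hexp : ∀ (i' j' : Fin 3) (c : ℝ) (p : EuclideanSpace ℝ (Fin 2)),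
      ⟪(6 * lam i' p * lam 2 p) • (x 2 - x i') + (c * lam 0 p * lam 1 p) • (x 1 - x 0),
        lam j' p • g 2 - lam 2 p • g j'⟫ =
      (6 * lam i' p * lam 2 p) * (lam j' p * (lam 2 (x 2) - lam 2 (x i'))
          - lam 2 p * (lam j' (x 2) - lam j' (x i'))) +
        (c * lam 0 p * lam 1 p) * (lam j' p * (lam 2 (x 1) - lam 2 (x 0))
          - lam 2 p * (lam j' (x 1) - lam j' (x 0))) := by
    intro i' j' c p
    simp only [inner_add_left, inner_sub_right, real_inner_smul_left, real_inner_smul_right,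
      hAtom]
    ring
  -- the three integrals over the standard triangle
  have hQ00 : (∫ q in MacroAux.stdTri,
      (fun a b c : ℝ => 6*a^2*c + 6*a*c^2 - β*(a*b*c)) (1 - q.1 - q.2) q.1 q.2)
      = 1/5 - β/120 := by
    rw [MacroAux.integral_stdTri _ (by fun_prop)]
    rw [intervalIntegral.integral_congr (g := fun s : ℝ => (1:ℝ) + (-4 - β/6)*s + (6 + β/2)*s^2 +
        (-4 - β/2)*s^3 + (1 + β/6)*s^4) ?_, MacroAux.integral_poly4]
    · norm_num; ring
    · intro s _
      simp only []
      rw [intervalIntegral.integral_congr (g := fun t : ℝ => (0:ℝ) +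
          (6*(1-s)^2 - β*(s*(1-s)))*t + (β*s - 6*(1-s))*t^2 + 0*t^3 + 0*t^4)
          (fun t _ => by simp only []; ring), MacroAux.integral_poly4]
      ring
  have hQ01 : (∫ q in MacroAux.stdTri,
      (fun a b c : ℝ => (6 + β)*(a*b*c)) (1 - q.1 - q.2) q.1 q.2)
      = (6 + β)/120 := by
    rw [MacroAux.integral_stdTri _ (by fun_prop)]
    rw [intervalIntegral.integral_congr (g := fun s : ℝ => (0:ℝ) + ((6+β)/6)*s +
        (-(6+β)/2)*s^2 + ((6+β)/2)*s^3 + (-(6+β)/6)*s^4) ?_, MacroAux.integral_poly4]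
    · norm_num; ring
    · intro s _
      simp only []
      rw [intervalIntegral.integral_congr (g := fun t : ℝ => (0:ℝ) +
          ((6+β)*(s*(1-s)))*t + (-(6+β)*s)*t^2 + 0*t^3 + 0*t^4)
          (fun t _ => by simp only []; ring), MacroAux.integral_poly4]
      ring
  have hQ11 : (∫ q in MacroAux.stdTri,
      (fun a b c : ℝ => 6*b^2*c + 6*b*c^2 - β*(a*b*c)) (1 - q.1 - q.2) q.1 q.2)
      = 1/5 - β/120 := by
    rw [MacroAux.integral_stdTri _ (by fun_prop)]
    rw [intervalIntegral.integral_congr (g := fun s : ℝ => (0:ℝ) + (2 - β/6)*s +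
        (-3 + β/2)*s^2 + (-β/2)*s^3 + (1 + β/6)*s^4) ?_, MacroAux.integral_poly4]
    · norm_num; ring
    · intro s _
      simp only []
      rw [intervalIntegral.integral_congr (g := fun t : ℝ => (0:ℝ) +
          (6*s^2 - β*(s*(1-s)))*t + (6*s + β*s)*t^2 + 0*t^3 + 0*t^4)
          (fun t _ => by simp only []; ring), MacroAux.integral_poly4]
      ring
  -- the matrix identity
  have hMeq : M = (volume (convexHull ℝ (Set.range x))).toReal •
      !![(24 - β) / 60, (6 + β) / 60; (6 + β) / 60, (24 - β) / 60] := by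
    ext i j
    fin_cases i <;> fin_cases j
    · show M 0 0 = ((volume (convexHull ℝ (Set.range x))).toReal •
        !![(24 - β) / 60, (6 + β) / 60; (6 + β) / 60, (24 - β) / 60]) 0 0
      have e : M 0 0 = ∫ p in convexHull ℝ (Set.range x),
          (fun a b c : ℝ => 6*a^2*c + 6*a*c^2 - β*(a*b*c)) (lam 0 p) (lam 1 p) (lam 2 p) := by
        rw [hM 0 0]
        apply setIntegral_congr_fun Tmeas
        intro p _
        simp only []
        rw [hexp]
        simp [hlam]
        ring
      rw [e, trans (fun a b c : ℝ => 6*a^2*c + 6*a*c^2 - β*(a*b*c)), hQ00, hvol]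
      simp [Matrix.smul_apply, smul_eq_mul]
      ring
    · show M 0 1 = ((volume (convexHull ℝ (Set.range x))).toReal •
        !![(24 - β) / 60, (6 + β) / 60; (6 + β) / 60, (24 - β) / 60]) 0 1
      have e : M 0 1 = ∫ p in convexHull ℝ (Set.range x),
          (fun a b c : ℝ => (6 + β)*(a*b*c)) (lam 0 p) (lam 1 p) (lam 2 p) := by
        rw [hM 0 1]
        apply setIntegral_congr_fun Tmeas
        intro p _
        simp only []
        rw [hexp]
        simp [hlam]
        ring
      rw [e, trans (fun a b c : ℝ => (6 + β)*(a*b*c)), hQ01, hvol]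
      simp [Matrix.smul_apply, smul_eq_mul]
      ring
    · show M 1 0 = ((volume (convexHull ℝ (Set.range x))).toReal •
        !![(24 - β) / 60, (6 + β) / 60; (6 + β) / 60, (24 - β) / 60]) 1 0
      have e : M 1 0 = ∫ p in convexHull ℝ (Set.range x),
          (fun a b c : ℝ => (6 + β)*(a*b*c)) (lam 0 p) (lam 1 p) (lam 2 p) := by
        rw [hM 1 0]
        apply setIntegral_congr_fun Tmeas
        intro p _
        simp only []
        rw [hexp]
        simp [hlam]
        ring
      rw [e, trans (fun a b c : ℝ => (6 + β)*(a*b*c)), hQ01, hvol]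
      simp [Matrix.smul_apply, smul_eq_mul]
      ring
    · show M 1 1 = ((volume (convexHull ℝ (Set.range x))).toReal •
        !![(24 - β) / 60, (6 + β) / 60; (6 + β) / 60, (24 - β) / 60]) 1 1
      have e : M 1 1 = ∫ p in convexHull ℝ (Set.range x),
          (fun a b c : ℝ => 6*b^2*c + 6*b*c^2 - β*(a*b*c)) (lam 0 p) (lam 1 p) (lam 2 p) := by
        rw [hM 1 1]
        apply setIntegral_congr_fun Tmeas
        intro p _
        simp only []
        rw [hexp]
        simp [hlam]
        ring
      rw [e, trans (fun a b c : ℝ => 6*b^2*c + 6*b*c^2 - β*(a*b*c)), hQ11, hvol]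
      simp [Matrix.smul_apply, smul_eq_mul]
      ring
  refine ⟨hMeq, ?_⟩
  -- eigenvalue bound
  intro μ hμ
  set vol := (volume (convexHull ℝ (Set.range x))).toReal with hvoldef
  have hm00 : M 0 0 = vol * ((24 - β)/60) := by
    rw [hMeq]
    simp [Matrix.smul_apply, smul_eq_mul]
  have hm01 : M 0 1 = vol * ((6 + β)/60) := by
    rw [hMeq]
    simp [Matrix.smul_apply, smul_eq_mul]
  have hm10 : M 1 0 = vol * ((6 + β)/60) := by
    rw [hMeq]
    simp [Matrix.smul_apply, smul_eq_mul]
  have hm11 : M 1 1 = vol * ((24 - β)/60) := by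
    rw [hMeq]
    simp [Matrix.smul_apply, smul_eq_mul]
  obtain ⟨v, hv⟩ := hμ.exists_hasEigenvector
  have hv0 : M.mulVec v = μ • v := by
    rw [← Matrix.toLin'_apply M v, hv.apply_eq_smul]
  have eq0 : M 0 0 * v 0 + M 0 1 * v 1 = μ * v 0 := by
    have := congr_fun hv0 0
    simpa [Matrix.mulVec, dotProduct, Fin.sum_univ_two] using this
  have eq1 : M 1 0 * v 0 + M 1 1 * v 1 = μ * v 1 := by
    have := congr_fun hv0 1
    simpa [Matrix.mulVec, dotProduct, Fin.sum_univ_two] using this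
  rw [hm00, hm01] at eq0
  rw [hm10, hm11] at eq1
  by_cases hsum : v 0 + v 1 = 0
  · -- v 1 = - v 0, eigenvalue is a - b
    have hv1 : v 1 = -(v 0) := by linarith
    have hv00 : v 0 ≠ 0 := by
      intro h0
      apply hv.right
      funext k
      fin_cases k <;> simp [hv1, h0]
    rw [hv1] at eq0
    have hmu : μ = vol * ((24 - β)/60) - vol * ((6 + β)/60) := by
      have : (vol * ((24 - β)/60) - vol * ((6 + β)/60)) * v 0 = μ * v 0 := by ring_nf; ring_nf at eq0; linarith
      exact (mul_right_cancel₀ hv00 this).symm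
    rw [hmu]
    nlinarith [hvolpos, hβ']
  · -- eigenvalue is a + b
    have hmu : μ = vol * ((24 - β)/60) + vol * ((6 + β)/60) := by
      have : (vol * ((24 - β)/60) + vol * ((6 + β)/60)) * (v 0 + v 1) = μ * (v 0 + v 1) := by
        ring_nf; ring_nf at eq0 eq1; linarith
      exact (mul_right_cancel₀ hsum this).symm
    rw [hmu]
    nlinarith [hvolpos, hβ]
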